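/- Suppose V carries the structure of a Lie algebra over 𝔽_p with bracket ⁅ , ⁆, and ⟨ , ⟩ : V × V → 𝔽_p is a bilinear form satisfying ⟨⁅x,y⁆, z⟩ = −⟨y, ⁅x,z⁆⟩ for all x, y, z ∈ V. Let X, Y ∈ B and s ≥ 0 be such that for every x ∈ V and every r ≥ s, (ad x)^{[p^r]}(Y) ∈ X·B, where ad x is the endomorphism v ↦ ⁅x,v⁆ of V. Then for all x, y ∈ V, D_f(Y) ∈ X·B, where f ∈ V* is the functional f(v) = ⟨y, ⁅x,v⁆⟩. -/

import Mathlib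

open MvPolynomial

/-- The linear form `ℓ(v) = Σ_i v_i X_i` in `B = (ZMod p)[X_1, …, X_m]` associated to a
vector `v : Fin m → ZMod p`. -/
noncomputable def linForm (p m : ℕ) (v : Fin m → ZMod p) :
    MvPolynomial (Fin m) (ZMod p) :=
  ∑ i : Fin m, MvPolynomial.C (v i) * MvPolynomial.X i

/-- For `f ∈ V*`, the unique `𝔽_p`-linear derivation `D_f` of `B` with
`D_f(X_i) = f(e_i)` (a constant) for each `i`. -/
noncomputable def constDer (p m : ℕ) (f : (Fin m → ZMod p) →ₗ[ZMod p] ZMod p) :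
    Derivation (ZMod p) (MvPolynomial (Fin m) (ZMod p)) (MvPolynomial (Fin m) (ZMod p)) :=
  MvPolynomial.mkDerivation (ZMod p) fun i => MvPolynomial.C (f (Pi.single i 1))

/-- For an endomorphism `φ` of `V` and `r ≥ 0`, the unique `𝔽_p`-linear derivation
`φ^{[p^r]}` of `B` with `φ^{[p^r]}(X_i) = ℓ(φ(e_i))^(p^r)` for each `i`. -/
noncomputable def frobDer (p m : ℕ)
    (φ : (Fin m → ZMod p) →ₗ[ZMod p] (Fin m → ZMod p)) (r : ℕ) :
    Derivation (ZMod p) (MvPolynomial (Fin m) (ZMod p)) (MvPolynomial (Fin m) (ZMod p)) :=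
  MvPolynomial.mkDerivation (ZMod p) fun i => (linForm p m (φ (Pi.single i 1))) ^ p ^ r

namespace Stmt9Aux

variable {p m : ℕ} [Fact p.Prime]

lemma zmod_pow_ppow (a : ZMod p) (r : ℕ) : a ^ p ^ r = a := by
  induction r with
  | zero => simp
  | succ r ih => rw [pow_succ, pow_mul, ih, ZMod.pow_card]

lemma linForm_pow (v : Fin m → ZMod p) (r : ℕ) :
    (linForm p m v) ^ p ^ r =
      ∑ j : Fin m, C (v j) * (X j : MvPolynomial (Fin m) (ZMod p)) ^ p ^ r := by
  rw [linForm, sum_pow_char_pow]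
  refine Finset.sum_congr rfl fun j _ => ?_
  rw [mul_pow, ← C_pow, zmod_pow_ppow]

lemma derivation_apply
    (D : Derivation (ZMod p) (MvPolynomial (Fin m) (ZMod p)) (MvPolynomial (Fin m) (ZMod p)))
    (q : MvPolynomial (Fin m) (ZMod p)) :
    D q = ∑ i : Fin m, pderiv i q * D (X i) := by
  induction q using MvPolynomial.induction_on with
  | C a => simp [derivation_C]
  | add f g hf hg =>
      simp only [map_add, hf, hg, add_mul, ← Finset.sum_add_distrib]
  | mul_X f i hf =>
      have h2 : ∑ j : Fin m, f * pderiv j (X i) * D (X j) = f * D (X i) := by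
        rw [Finset.sum_eq_single i]
        · rw [pderiv_X_self, mul_one]
        · intro j _ hji
          rw [pderiv_X_of_ne (fun h => hji h.symm), mul_zero, zero_mul]
        · intro h; exact absurd (Finset.mem_univ i) h
      rw [D.leibniz, smul_eq_mul, smul_eq_mul, hf, Finset.mul_sum, ← h2,
        ← Finset.sum_add_distrib]
      refine Finset.sum_congr rfl fun j _ => ?_
      rw [pderiv_mul]
      ring

lemma pderiv_linForm (v : Fin m → ZMod p) (i : Fin m) :
    pderiv i (linForm p m v) = C (v i) := by
  rw [linForm, map_sum]
  rw [Finset.sum_eq_single i]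
  · rw [pderiv_mul, pderiv_C, zero_mul, pderiv_X_self, mul_one, zero_add]
  · intro j _ hji
    rw [pderiv_mul, pderiv_C, zero_mul, pderiv_X_of_ne hji, mul_zero, zero_add]
  · intro h; exact absurd (Finset.mem_univ i) h

end Stmt9Aux
namespace Stmt9Aux

variable {p m : ℕ} [Fact p.Prime]

/-- Coefficient vector of the derivation `(ad z)^{[p^r]}` in the basis `X_j^{p^r}`. -/
noncomputable def Gv (br : (Fin m → ZMod p) →ₗ[ZMod p] (Fin m → ZMod p) →ₗ[ZMod p] (Fin m → ZMod p))
    (Y : MvPolynomial (Fin m) (ZMod p)) (z : Fin m → ZMod p) (j : Fin m) :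
    MvPolynomial (Fin m) (ZMod p) :=
  ∑ i : Fin m, pderiv i Y * C ((br z (Pi.single i 1)) j)

lemma frobDer_eq (br : (Fin m → ZMod p) →ₗ[ZMod p] (Fin m → ZMod p) →ₗ[ZMod p] (Fin m → ZMod p))
    (Y : MvPolynomial (Fin m) (ZMod p)) (z : Fin m → ZMod p) (r : ℕ) :
    frobDer p m (br z) r Y = ∑ j : Fin m, Gv br Y z j * (X j : MvPolynomial (Fin m) (ZMod p)) ^ p ^ r := by
  rw [derivation_apply]
  simp only [frobDer, mkDerivation_X, linForm_pow, Finset.mul_sum, Gv]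
  rw [Finset.sum_comm]
  refine Finset.sum_congr rfl fun j _ => ?_
  rw [Finset.sum_mul]
  refine Finset.sum_congr rfl fun i _ => ?_
  ring

lemma constDer_apply (f : (Fin m → ZMod p) →ₗ[ZMod p] ZMod p)
    (Y : MvPolynomial (Fin m) (ZMod p)) :
    constDer p m f Y = ∑ i : Fin m, pderiv i Y * C (f (Pi.single i 1)) := by
  rw [derivation_apply]
  simp only [constDer, mkDerivation_X]

/-- Decompose a vector along the standard basis. -/
lemma vec_decomp (w : Fin m → ZMod p) :
    w = ∑ j : Fin m, (w j) • (Pi.single j 1 : Fin m → ZMod p) := by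
  funext k
  rw [Finset.sum_apply]
  simp only [Pi.smul_apply, Pi.single_apply, smul_eq_mul, mul_ite, mul_one, mul_zero]
  rw [Finset.sum_ite_eq]
  simp

lemma pair_decomp (g : (Fin m → ZMod p) →ₗ[ZMod p] ZMod p) (w : Fin m → ZMod p) :
    g w = ∑ j : Fin m, (w j) * g (Pi.single j 1) := by
  conv_lhs => rw [vec_decomp w]
  rw [map_sum]
  refine Finset.sum_congr rfl fun j _ => ?_
  rw [map_smul, smul_eq_mul]

/-- `D_f Y` as a combination of the `Gv` vector. -/
lemma constDer_eq_sum
    (br : (Fin m → ZMod p) →ₗ[ZMod p] (Fin m → ZMod p) →ₗ[ZMod p] (Fin m → ZMod p))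
    (Φ : (Fin m → ZMod p) →ₗ[ZMod p] (Fin m → ZMod p) →ₗ[ZMod p] ZMod p)
    (Y : MvPolynomial (Fin m) (ZMod p)) (x y : Fin m → ZMod p) :
    constDer p m ((Φ y) ∘ₗ (br x)) Y = ∑ j : Fin m, C (Φ y (Pi.single j 1)) * Gv br Y x j := by
  rw [constDer_apply]
  simp only [LinearMap.comp_apply]
  have : ∀ i, (C (Φ y (br x (Pi.single i 1))) : MvPolynomial (Fin m) (ZMod p)) =
      ∑ j : Fin m, C ((br x (Pi.single i 1)) j) * C (Φ y (Pi.single j 1)) := by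
    intro i
    rw [pair_decomp (Φ y) (br x (Pi.single i 1)), map_sum]
    refine Finset.sum_congr rfl fun j _ => ?_
    rw [C_mul]
  simp only [this, Finset.mul_sum, Gv]
  rw [Finset.sum_comm]
  refine Finset.sum_congr rfl fun j _ => Finset.sum_congr rfl fun i _ => by ring

/-- `D_f Y` via the invariance of the form. -/
lemma constDer_eq_psi
    (br : (Fin m → ZMod p) →ₗ[ZMod p] (Fin m → ZMod p) →ₗ[ZMod p] (Fin m → ZMod p))
    (Φ : (Fin m → ZMod p) →ₗ[ZMod p] (Fin m → ZMod p) →ₗ[ZMod p] ZMod p)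
    (hinv : ∀ x y z, Φ (br x y) z = -Φ y (br x z))
    (Y : MvPolynomial (Fin m) (ZMod p)) (x y : Fin m → ZMod p) :
    constDer p m ((Φ y) ∘ₗ (br x)) Y =
      -∑ i : Fin m, pderiv i Y * C (Φ (br x y) (Pi.single i 1)) := by
  rw [constDer_apply, ← Finset.sum_neg_distrib]
  refine Finset.sum_congr rfl fun i _ => ?_
  rw [LinearMap.comp_apply]
  have h := hinv x y (Pi.single i 1)
  have h2 : Φ y (br x (Pi.single i 1)) = -Φ (br x y) (Pi.single i 1) := by
    rw [h]; ring
  rw [h2, map_neg]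
  ring

lemma br_antisymm
    (br : (Fin m → ZMod p) →ₗ[ZMod p] (Fin m → ZMod p) →ₗ[ZMod p] (Fin m → ZMod p))
    (halt : ∀ x, br x x = 0) (x y : Fin m → ZMod p) : br x y = -br y x := by
  have h := halt (x + y)
  simp only [map_add, LinearMap.add_apply, halt x, halt y, zero_add, add_zero] at h
  exact eq_neg_of_add_eq_zero_right h

end Stmt9Aux
namespace Stmt9Aux

variable {p m : ℕ} [Fact p.Prime]

lemma isUnit_C_of_ne {a : ZMod p} (ha : a ≠ 0) :
    IsUnit (C a : MvPolynomial (Fin m) (ZMod p)) :=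
  IsUnit.of_mul_eq_one (C a⁻¹) (by rw [← C_mul, mul_inv_cancel₀ ha, C_1])

lemma linForm_sq_dvd {ρ : MvPolynomial (Fin m) (ZMod p)} (hρ : Prime ρ)
    {c : Fin m → ZMod p} (h : ρ * ρ ∣ linForm p m c) : c = 0 := by
  obtain ⟨q, hq⟩ := h
  funext i
  by_contra hne
  have h1 := congrArg (pderiv i) hq
  rw [pderiv_linForm, mul_assoc, pderiv_mul] at h1
  have hdvd : ρ ∣ C (c i) :=
    ⟨pderiv i ρ * q + pderiv i (ρ * q), by rw [h1]; ring⟩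
  exact hρ.not_unit (isUnit_of_dvd_unit hdvd (isUnit_C_of_ne hne))

lemma linForm_dvd_proportional {ρ : MvPolynomial (Fin m) (ZMod p)} (hρ : Prime ρ)
    {c c₀ : Fin m → ZMod p}
    (h : ρ ∣ linForm p m c) (h₀ : ρ ∣ linForm p m c₀) (hc₀ : c₀ ≠ 0) :
    ∃ t : ZMod p, c = t • c₀ := by
  by_cases hc : c = 0
  · exact ⟨0, by simp [hc]⟩
  obtain ⟨q, hq⟩ := h
  obtain ⟨q₀, hq₀⟩ := h₀
  have hq' : ¬ ρ ∣ q := fun ⟨w, hw⟩ => hc (linForm_sq_dvd hρ ⟨w, by rw [hq, hw]; ring⟩)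
  have hq₀' : ¬ ρ ∣ q₀ := fun ⟨w, hw⟩ => hc₀ (linForm_sq_dvd hρ ⟨w, by rw [hq₀, hw]; ring⟩)
  set I : Ideal (MvPolynomial (Fin m) (ZMod p)) := Ideal.span {ρ} with hI
  haveI hIp : I.IsPrime := (Ideal.span_singleton_prime hρ.ne_zero).mpr hρ
  set π : MvPolynomial (Fin m) (ZMod p) →+* (MvPolynomial (Fin m) (ZMod p) ⧸ I) :=
    Ideal.Quotient.mk I with hπ
  have hπρ : π ρ = 0 := Ideal.Quotient.eq_zero_iff_mem.mpr (Ideal.subset_span rfl)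
  have hmem : ∀ w : MvPolynomial (Fin m) (ZMod p), π w = 0 ↔ ρ ∣ w := by
    intro w
    rw [hπ, Ideal.Quotient.eq_zero_iff_mem, hI, Ideal.mem_span_singleton]
  have key : ∀ (d : Fin m → ZMod p) (qq : MvPolynomial (Fin m) (ZMod p)),
      linForm p m d = ρ * qq → ∀ i, π (C (d i)) = π (pderiv i ρ) * π qq := by
    intro d qq hdq i
    have h1 := congrArg (pderiv i) hdq
    rw [pderiv_linForm, pderiv_mul] at h1
    rw [h1, map_add, map_mul, map_mul, hπρ, zero_mul, add_zero]
  have cross : ∀ i j, c i * c₀ j = c₀ i * c j := by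
    intro i j
    have h2 : π (C (c i * c₀ j)) = π (C (c₀ i * c j)) := by
      rw [C_mul, C_mul, map_mul, map_mul, key c q hq i, key c₀ q₀ hq₀ j,
        key c₀ q₀ hq₀ i, key c q hq j]
      ring
    have hinj : Function.Injective (π.comp (C : ZMod p →+* MvPolynomial (Fin m) (ZMod p))) :=
      RingHom.injective _
    exact hinj h2
  obtain ⟨i₀, hi₀⟩ : ∃ i₀, c₀ i₀ ≠ 0 := by
    by_contra hall; push_neg at hall; exact hc₀ (funext hall)
  refine ⟨c i₀ * (c₀ i₀)⁻¹, funext fun i => ?_⟩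
  have h4 : c i * c₀ i₀ * (c₀ i₀)⁻¹ = c₀ i * c i₀ * (c₀ i₀)⁻¹ := by rw [cross i i₀]
  rw [mul_assoc, mul_inv_cancel₀ hi₀, mul_one] at h4
  rw [Pi.smul_apply, smul_eq_mul, h4]
  ring

lemma exists_zmod_of_pow_eq {L : Type*} [Field L] (em : ZMod p →+* L) {x : L}
    (hx : x ^ p = x) : ∃ a : ZMod p, em a = x := by
  classical
  haveI : NeZero p := ⟨(Fact.out : p.Prime).ne_zero⟩
  set f : Polynomial L := Polynomial.X ^ p - Polynomial.X with hf
  have hp1 : 1 < p := (Fact.out : p.Prime).one_lt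
  have hfd : f.natDegree = p := by
    rw [hf]
    have hdX : (Polynomial.X : Polynomial L).natDegree < (Polynomial.X ^ p : Polynomial L).natDegree := by
      rw [Polynomial.natDegree_X, Polynomial.natDegree_X_pow]
      exact hp1
    rw [Polynomial.natDegree_sub_eq_left_of_natDegree_lt hdX, Polynomial.natDegree_X_pow]
  have hf0 : f ≠ 0 := by
    intro h0
    rw [h0, Polynomial.natDegree_zero] at hfd
    omega
  have hinj : Function.Injective em := RingHom.injective _
  set s : Multiset L := (Finset.univ : Finset (ZMod p)).val.map (fun a => em a)
    with hs
  have hnodup : s.Nodup := Multiset.Nodup.map hinj Finset.univ.nodup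
  have hroot : ∀ y ∈ s, f.IsRoot y := by
    intro y hy
    obtain ⟨a, _, rfl⟩ := Multiset.mem_map.mp hy
    simp only [Polynomial.IsRoot, hf, Polynomial.eval_sub, Polynomial.eval_pow,
      Polynomial.eval_X]
    rw [← map_pow, ZMod.pow_card, sub_self]
  by_contra hno
  push_neg at hno
  have hxs : x ∉ s := by
    intro hxs
    obtain ⟨a, _, ha⟩ := Multiset.mem_map.mp hxs
    exact hno a ha
  have hnodup2 : (x ::ₘ s).Nodup := Multiset.nodup_cons.mpr ⟨hxs, hnodup⟩
  have hmem : ∀ y ∈ (x ::ₘ s), y ∈ f.roots := by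
    intro y hy
    rw [Polynomial.mem_roots hf0]
    rcases Multiset.mem_cons.mp hy with rfl | hy'
    · simp only [Polynomial.IsRoot, hf, Polynomial.eval_sub, Polynomial.eval_pow,
        Polynomial.eval_X]
      rw [hx, sub_self]
    · exact hroot y hy'
  have hle : (x ::ₘ s) ≤ f.roots := by
    rw [Multiset.le_iff_count]
    intro y
    by_cases hy : y ∈ (x ::ₘ s)
    · rw [Multiset.count_eq_one_of_mem hnodup2 hy]
      exact Multiset.one_le_count_iff_mem.mpr (hmem y hy)
    · rw [Multiset.count_eq_zero_of_notMem hy]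
      exact Nat.zero_le _
  have hcard := Multiset.card_le_card hle
  rw [Multiset.card_cons] at hcard
  have hcs : Multiset.card s = p := by
    rw [hs, Multiset.card_map]
    have h3 : (Finset.univ : Finset (ZMod p)).card = p := by
      rw [Finset.card_univ, ZMod.card]
    exact h3
  have h2 := f.card_roots'
  omega

end Stmt9Aux
namespace Stmt9Aux

variable {p m : ℕ} [Fact p.Prime]

lemma core_field {L : Type*} [Field L] [CharP L p] (em : ZMod p →+* L) (t : Fin m → L) :
    ∀ (n : ℕ) (S : Finset (Fin m)), S.card = n →
    (∀ c : Fin m → ZMod p, (∀ j, j ∉ S → c j = 0) →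
        (∑ j ∈ S, em (c j) * t j) = 0 → c = 0) →
    ∀ (u : Fin m → L) (R : ℕ),
      (∀ r, R ≤ r → ∑ j ∈ S, u j * t j ^ p ^ r = 0) →
      ∀ j ∈ S, u j = 0 := by
  classical
  have hppos : 0 < p := (Fact.out : p.Prime).pos
  intro n
  induction n with
  | zero =>
    intro S hS _ u R _ j hj
    rw [Finset.card_eq_zero] at hS
    subst hS
    exact absurd hj (Finset.notMem_empty j)
  | succ n ih =>
    intro S hS hind u R hyp
    obtain ⟨j₀, hj₀⟩ : S.Nonempty := Finset.card_pos.mp (by omega)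
    have hj₀S' : j₀ ∉ S.erase j₀ := Finset.notMem_erase j₀ S
    have hcard' : (S.erase j₀).card = n := by
      rw [Finset.card_erase_of_mem hj₀, hS]
      rfl
    have hind' : ∀ c : Fin m → ZMod p, (∀ j, j ∉ S.erase j₀ → c j = 0) →
        (∑ j ∈ S.erase j₀, em (c j) * t j) = 0 → c = 0 := by
      intro c hsupp hsum
      refine hind c (fun j hj => hsupp j (fun hj' => hj (Finset.mem_of_mem_erase hj'))) ?_
      rw [← Finset.add_sum_erase _ _ hj₀, hsupp j₀ hj₀S', map_zero, zero_mul, zero_add]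
      exact hsum
    by_cases hu0 : u j₀ = 0
    · have hyp' : ∀ r, R ≤ r → ∑ j ∈ S.erase j₀, u j * t j ^ p ^ r = 0 := by
        intro r hr
        have h := hyp r hr
        rwa [← Finset.add_sum_erase _ _ hj₀, hu0, zero_mul, zero_add] at h
      intro j hj
      rcases eq_or_ne j j₀ with rfl | hne
      · exact hu0
      · exact ih (S.erase j₀) hcard' hind' u R hyp' j (Finset.mem_erase.mpr ⟨hne, hj⟩)
    · exfalso
      set w : Fin m → L := fun j => u j ^ p * u j₀ - u j * u j₀ ^ p with hw
      have hyp2 : ∀ r, R + 1 ≤ r → ∑ j ∈ S.erase j₀, w j * t j ^ p ^ r = 0 := by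
        intro r hr
        have e1 : ∑ j ∈ S.erase j₀, w j * t j ^ p ^ r = ∑ j ∈ S, w j * t j ^ p ^ r :=
          Finset.sum_erase S (by rw [hw]; ring_nf)
        have hr1 : R ≤ r - 1 := by omega
        have hr2 : (r - 1) + 1 = r := by omega
        have e2 : ∑ j ∈ S, u j ^ p * t j ^ p ^ r = 0 := by
          have e3 : ∑ j ∈ S, u j ^ p * t j ^ p ^ r
              = (∑ j ∈ S, u j * t j ^ p ^ (r - 1)) ^ p := by
            rw [sum_pow_char]
            refine Finset.sum_congr rfl fun j _ => ?_
            rw [mul_pow, ← pow_mul, ← pow_succ, hr2]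
          rw [e3, hyp (r - 1) hr1, zero_pow (by omega : p ≠ 0)]
        have e4 : ∑ j ∈ S, w j * t j ^ p ^ r
            = u j₀ * (∑ j ∈ S, u j ^ p * t j ^ p ^ r)
              - u j₀ ^ p * (∑ j ∈ S, u j * t j ^ p ^ r) := by
          rw [Finset.mul_sum, Finset.mul_sum, ← Finset.sum_sub_distrib]
          refine Finset.sum_congr rfl fun j _ => ?_
          rw [hw]; ring
        rw [e1, e4, e2, hyp r (by omega), mul_zero, mul_zero, sub_zero]
      have hw0 : ∀ j ∈ S.erase j₀, w j = 0 :=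
        ih (S.erase j₀) hcard' hind' w (R + 1) hyp2
      have hratio : ∀ j ∈ S, ∃ a : ZMod p, em a = u j / u j₀ := by
        intro j hj
        rcases eq_or_ne j j₀ with rfl | hne
        · exact ⟨1, by rw [map_one, div_self hu0]⟩
        · refine exists_zmod_of_pow_eq em ?_
          have h5 : u j ^ p * u j₀ = u j * u j₀ ^ p :=
            sub_eq_zero.mp (hw0 j (Finset.mem_erase.mpr ⟨hne, hj⟩))
          rw [div_pow, div_eq_div_iff (pow_ne_zero p hu0) hu0]
          exact h5
      set c : Fin m → ZMod p := fun j => if h : j ∈ S then (hratio j h).choose else 0 with hc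
      have hcs : ∀ j (h : j ∈ S), em (c j) = u j / u j₀ := by
        intro j h
        rw [hc]
        simp only [dif_pos h]
        exact (hratio j h).choose_spec
      have hcsupp : ∀ j, j ∉ S → c j = 0 := by
        intro j hj
        rw [hc]
        simp only [dif_neg hj]
      have huc : ∀ j ∈ S, u j = u j₀ * em (c j) := by
        intro j h
        rw [hcs j h, mul_div_cancel₀ _ hu0]
      have hsum0 : (∑ j ∈ S, em (c j) * t j) = 0 := by
        have h0 := hyp R le_rfl
        have e5 : ∑ j ∈ S, u j * t j ^ p ^ R
            = u j₀ * (∑ j ∈ S, em (c j) * t j) ^ p ^ R := by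
          rw [sum_pow_char_pow, Finset.mul_sum]
          refine Finset.sum_congr rfl fun j hj => ?_
          rw [huc j hj, mul_pow, ← map_pow, zmod_pow_ppow]
          ring
        rw [e5, mul_eq_zero] at h0
        rcases h0 with h0 | h0
        · exact absurd h0 hu0
        · exact pow_eq_zero_iff (by positivity) |>.mp h0
      have hc0 : c = 0 := hind c hcsupp hsum0
      have hc1 : em (c j₀) = 1 := by
        rw [hcs j₀ hj₀, div_self hu0]
      rw [hc0] at hc1
      simp only [Pi.zero_apply, map_zero] at hc1
      exact zero_ne_one hc1

end Stmt9Aux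
namespace Stmt9Aux

variable {p m : ℕ} [Fact p.Prime]

set_option synthInstance.maxHeartbeats 1000000 in
set_option maxHeartbeats 2000000 in
lemma core_B {ρ : MvPolynomial (Fin m) (ZMod p)} (hρ : Prime ρ) (S : Finset (Fin m))
    (hind : ∀ c : Fin m → ZMod p, (∀ j, j ∉ S → c j = 0) → ρ ∣ linForm p m c → c = 0) :
    ∀ (A : ℕ) (g : Fin m → MvPolynomial (Fin m) (ZMod p)) (R : ℕ),
      (∀ r, R ≤ r → ρ ^ A ∣ ∑ j ∈ S, g j * (X j : MvPolynomial (Fin m) (ZMod p)) ^ p ^ r) →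
      ∀ j ∈ S, ρ ^ A ∣ g j := by
  classical
  intro A
  induction A with
  | zero => intro g R _ j _; simp
  | succ A ih =>
    intro g R hyp j hj
    have h1 : ∀ j ∈ S, ρ ^ A ∣ g j :=
      ih g R fun r hr => dvd_trans (pow_dvd_pow ρ (Nat.le_succ A)) (hyp r hr)
    set g' : Fin m → MvPolynomial (Fin m) (ZMod p) :=
      fun j => if h : j ∈ S then (h1 j h).choose else 0 with hg'
    have hg'spec : ∀ j ∈ S, g j = ρ ^ A * g' j := by
      intro j hj
      rw [hg']
      simp only [dif_pos hj]
      exact (h1 j hj).choose_spec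
    have hρ0 : ρ ≠ 0 := hρ.ne_zero
    have hdvd1 : ∀ r, R ≤ r → ρ ∣ ∑ j ∈ S, g' j * (X j : MvPolynomial (Fin m) (ZMod p)) ^ p ^ r := by
      intro r hr
      obtain ⟨k, hk⟩ := hyp r hr
      have e1 : ∑ j ∈ S, g j * (X j : MvPolynomial (Fin m) (ZMod p)) ^ p ^ r
          = ρ ^ A * ∑ j ∈ S, g' j * (X j : MvPolynomial (Fin m) (ZMod p)) ^ p ^ r := by
        rw [Finset.mul_sum]
        refine Finset.sum_congr rfl fun j hj => ?_
        rw [hg'spec j hj]; ring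
      rw [e1, pow_succ, mul_assoc] at hk
      exact ⟨k, mul_left_cancel₀ (pow_ne_zero A hρ0) hk⟩
    -- pass to the residue field
    set I : Ideal (MvPolynomial (Fin m) (ZMod p)) := Ideal.span {ρ} with hI
    haveI hIp : I.IsPrime := (Ideal.span_singleton_prime hρ0).mpr hρ
    haveI : IsDomain (MvPolynomial (Fin m) (ZMod p) ⧸ I) := Ideal.Quotient.isDomain I
    set L := FractionRing (MvPolynomial (Fin m) (ZMod p) ⧸ I) with hL
    set φ : MvPolynomial (Fin m) (ZMod p) →+* L :=
      (algebraMap (MvPolynomial (Fin m) (ZMod p) ⧸ I) L).comp (Ideal.Quotient.mk I) with hφ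
    have hφ0 : ∀ w, φ w = 0 ↔ ρ ∣ w := by
      intro w
      rw [hφ, RingHom.comp_apply]
      constructor
      · intro h0
        have h2 : Ideal.Quotient.mk I w = 0 :=
          IsFractionRing.injective (MvPolynomial (Fin m) (ZMod p) ⧸ I) L (by rw [h0, map_zero])
        rwa [Ideal.Quotient.eq_zero_iff_mem, hI, Ideal.mem_span_singleton] at h2
      · intro hdvd
        have h2 : Ideal.Quotient.mk I w = 0 := by
          rw [Ideal.Quotient.eq_zero_iff_mem, hI]
          exact Ideal.mem_span_singleton.mpr hdvd
        rw [h2, map_zero]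
    set em : ZMod p →+* L := φ.comp (C : ZMod p →+* MvPolynomial (Fin m) (ZMod p)) with hem
    have halg : ∀ a : ZMod p, em a = φ (C a) := fun a => rfl
    haveI : CharP L p :=
      charP_of_injective_ringHom (RingHom.injective em) p
    have hcore := core_field (p := p) (m := m) (L := L) em (fun j => φ (X j)) S.card S rfl ?_ (fun j => φ (g' j)) R ?_
    · have h6 : φ (g' j) = 0 := hcore j hj
      rw [hφ0] at h6
      obtain ⟨k, hk⟩ := h6
      rw [hg'spec j hj, hk, pow_succ]
      exact ⟨k, by ring⟩
    · -- independence condition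
      intro c hsupp hsum
      refine hind c hsupp ?_
      rw [← hφ0]
      have e2 : linForm p m c = ∑ j ∈ S, C (c j) * (X j : MvPolynomial (Fin m) (ZMod p)) := by
        rw [linForm]
        refine (Finset.sum_subset (Finset.subset_univ S) ?_).symm
        intro j _ hjS
        rw [hsupp j hjS, C_0, zero_mul]
      rw [e2, map_sum]
      rw [← hsum]
      refine Finset.sum_congr rfl fun j' _ => ?_
      rw [map_mul, halg]
    · -- hypothesis transport
      intro r hr
      obtain ⟨k, hk⟩ := hdvd1 r hr
      have e3 : ∑ j' ∈ S, φ (g' j') * φ (X j') ^ p ^ r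
          = φ (∑ j' ∈ S, g' j' * (X j' : MvPolynomial (Fin m) (ZMod p)) ^ p ^ r) := by
        rw [map_sum]
        refine Finset.sum_congr rfl fun j' _ => ?_
        rw [map_mul, map_pow]
      rw [e3, hk, map_mul, (hφ0 ρ).mpr dvd_rfl, zero_mul]

end Stmt9Aux
namespace Stmt9Aux

variable {p m : ℕ} [Fact p.Prime]

set_option maxHeartbeats 2000000 in
lemma main_pow
    (br : (Fin m → ZMod p) →ₗ[ZMod p] (Fin m → ZMod p) →ₗ[ZMod p] (Fin m → ZMod p))
    (halt : ∀ x, br x x = 0)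
    (Φ : (Fin m → ZMod p) →ₗ[ZMod p] (Fin m → ZMod p) →ₗ[ZMod p] ZMod p)
    (hinv : ∀ x y z, Φ (br x y) z = -Φ y (br x z))
    (Y : MvPolynomial (Fin m) (ZMod p)) (s : ℕ)
    {ρ : MvPolynomial (Fin m) (ZMod p)} (hρ : Prime ρ) (A : ℕ)
    (hyp : ∀ z : Fin m → ZMod p, ∀ r, s ≤ r → ρ ^ A ∣ frobDer p m (br z) r Y)
    (x y : Fin m → ZMod p) :
    ρ ^ A ∣ constDer p m ((Φ y) ∘ₗ (br x)) Y := by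
  classical
  set R := max s A with hR
  have hyp' : ∀ z : Fin m → ZMod p, ∀ r, R ≤ r →
      ρ ^ A ∣ ∑ j : Fin m, Gv br Y z j * (X j : MvPolynomial (Fin m) (ZMod p)) ^ p ^ r := by
    intro z r hr
    have h := hyp z r (le_trans (le_max_left s A) hr)
    rwa [frobDer_eq] at h
  by_cases hex : ∃ c₀ : Fin m → ZMod p, c₀ ≠ 0 ∧ ρ ∣ linForm p m c₀
  · obtain ⟨c₀, hc₀ne, hc₀dvd⟩ := hex
    obtain ⟨j₀, hj₀⟩ : ∃ j₀, c₀ j₀ ≠ 0 := by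
      by_contra hall; push_neg at hall; exact hc₀ne (funext hall)
    have hind : ∀ c : Fin m → ZMod p, (∀ j, j ∉ Finset.univ.erase j₀ → c j = 0) →
        ρ ∣ linForm p m c → c = 0 := by
      intro c hsupp hdvd
      obtain ⟨t, rfl⟩ := linForm_dvd_proportional hρ hdvd hc₀dvd hc₀ne
      have h0 : t * c₀ j₀ = 0 := hsupp j₀ (Finset.notMem_erase j₀ _)
      rcases mul_eq_zero.mp h0 with h0 | h0
      · rw [h0, zero_smul]
      · exact absurd h0 hj₀
    have e1 : ∀ (f : Fin m → MvPolynomial (Fin m) (ZMod p)),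
        ∑ j ∈ Finset.univ.erase j₀, f j = (∑ j, f j) - f j₀ := by
      intro f
      rw [← Finset.add_sum_erase _ f (Finset.mem_univ j₀)]
      ring
    have hA : A ≤ p ^ R := by
      have h2 : A < 2 ^ A := Nat.lt_two_pow_self
      have h3 : 2 ^ A ≤ p ^ A := Nat.pow_le_pow_left (Fact.out : p.Prime).two_le A
      have h4 : p ^ A ≤ p ^ R := Nat.pow_le_pow_right (Fact.out : p.Prime).pos (le_max_right s A)
      omega
    have hred : ∀ z : Fin m → ZMod p, ∀ j,
        ρ ^ A ∣ C (c₀ j₀) * Gv br Y z j - C (c₀ j) * Gv br Y z j₀ := by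
      intro z
      have hyp2 : ∀ r, R ≤ r → ρ ^ A ∣ ∑ j ∈ Finset.univ.erase j₀,
          (C (c₀ j₀) * Gv br Y z j - C (c₀ j) * Gv br Y z j₀) *
            (X j : MvPolynomial (Fin m) (ZMod p)) ^ p ^ r := by
        intro r hr
        have e : ∑ j ∈ Finset.univ.erase j₀,
            (C (c₀ j₀) * Gv br Y z j - C (c₀ j) * Gv br Y z j₀) *
              (X j : MvPolynomial (Fin m) (ZMod p)) ^ p ^ r
            = C (c₀ j₀) * (∑ j : Fin m, Gv br Y z j * (X j : MvPolynomial (Fin m) (ZMod p)) ^ p ^ r)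
              - Gv br Y z j₀ * (linForm p m c₀) ^ p ^ r := by
          rw [e1]
          have h5 : (C (c₀ j₀) * Gv br Y z j₀ - C (c₀ j₀) * Gv br Y z j₀) *
              (X j₀ : MvPolynomial (Fin m) (ZMod p)) ^ p ^ r = 0 := by ring
          rw [h5, sub_zero, linForm_pow, Finset.mul_sum, Finset.mul_sum, ← Finset.sum_sub_distrib]
          exact Finset.sum_congr rfl fun j _ => by ring
        rw [e]
        obtain ⟨k, hk⟩ := hc₀dvd
        have hdvd2 : ρ ^ A ∣ (linForm p m c₀) ^ p ^ r := by
          rw [hk, mul_pow]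
          exact dvd_mul_of_dvd_left
            (dvd_trans (pow_dvd_pow ρ (le_trans hA (Nat.pow_le_pow_right (Fact.out : p.Prime).pos hr))) dvd_rfl) _
        exact dvd_sub (Dvd.dvd.mul_left (hyp' z r hr) _) (Dvd.dvd.mul_left hdvd2 _)
      have hcore := core_B hρ (Finset.univ.erase j₀) hind A
        (fun j => C (c₀ j₀) * Gv br Y z j - C (c₀ j) * Gv br Y z j₀) R hyp2
      intro j
      rcases eq_or_ne j j₀ with rfl | hne
      · rw [sub_self]
        exact dvd_zero _
      · exact hcore j (Finset.mem_erase.mpr ⟨hne, Finset.mem_univ j⟩)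
    set γ : (Fin m → ZMod p) → ZMod p := fun v => Φ v c₀ with hγ
    have hpairγ : ∀ v : Fin m → ZMod p,
        ∑ j : Fin m, C (Φ v (Pi.single j 1)) * C (c₀ j) = (C (γ v) : MvPolynomial (Fin m) (ZMod p)) := by
      intro v
      rw [show γ v = Φ v c₀ from rfl, pair_decomp (Φ v) c₀, map_sum]
      exact Finset.sum_congr rfl fun j _ => by rw [C_mul]; ring
    have hcong : ∀ (z v : Fin m → ZMod p),
        ρ ^ A ∣ C (c₀ j₀) * constDer p m ((Φ v) ∘ₗ (br z)) Y - C (γ v) * Gv br Y z j₀ := by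
      intro z v
      have h7 : ρ ^ A ∣ ∑ j : Fin m, C (Φ v (Pi.single j 1)) *
          (C (c₀ j₀) * Gv br Y z j - C (c₀ j) * Gv br Y z j₀) :=
        Finset.dvd_sum fun j _ => Dvd.dvd.mul_left (hred z j) _
      have e8 : ∑ j : Fin m, C (Φ v (Pi.single j 1)) *
          (C (c₀ j₀) * Gv br Y z j - C (c₀ j) * Gv br Y z j₀)
          = C (c₀ j₀) * constDer p m ((Φ v) ∘ₗ (br z)) Y - C (γ v) * Gv br Y z j₀ := by
        rw [constDer_eq_sum br Φ Y z v]
        simp only [mul_sub, Finset.sum_sub_distrib]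
        congr 1
        · rw [Finset.mul_sum]
          exact Finset.sum_congr rfl fun j _ => by ring
        · rw [← hpairγ v, Finset.sum_mul]
          exact Finset.sum_congr rfl fun j _ => by ring
      rwa [e8] at h7
    have hdiag : ∀ z : Fin m → ZMod p, constDer p m ((Φ z) ∘ₗ (br z)) Y = 0 := by
      intro z
      rw [constDer_eq_psi br Φ hinv Y z z, halt z]
      simp
    have hanti : constDer p m ((Φ y) ∘ₗ (br x)) Y = - constDer p m ((Φ x) ∘ₗ (br y)) Y := by
      rw [constDer_eq_psi br Φ hinv Y x y, constDer_eq_psi br Φ hinv Y y x,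
        br_antisymm br halt x y]
      simp only [map_neg, LinearMap.neg_apply, mul_neg, Finset.sum_neg_distrib, neg_neg]
    by_cases hγy : γ y = 0
    · have h9 := hcong x y
      rw [hγy, map_zero, zero_mul, sub_zero] at h9
      have e10 : constDer p m ((Φ y) ∘ₗ (br x)) Y
          = C ((c₀ j₀)⁻¹) * (C (c₀ j₀) * constDer p m ((Φ y) ∘ₗ (br x)) Y) := by
        rw [← mul_assoc, ← C_mul, inv_mul_cancel₀ hj₀, C_1, one_mul]
      rw [e10]
      exact Dvd.dvd.mul_left h9 _
    · have h11 := hcong y y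
      rw [hdiag y, mul_zero, zero_sub, dvd_neg] at h11
      have h12 : ρ ^ A ∣ Gv br Y y j₀ := by
        have e13 : Gv br Y y j₀ = C ((γ y)⁻¹) * (C (γ y) * Gv br Y y j₀) := by
          rw [← mul_assoc, ← C_mul, inv_mul_cancel₀ hγy, C_1, one_mul]
        rw [e13]
        exact Dvd.dvd.mul_left h11 _
      have h14 := hcong y x
      have h15 : ρ ^ A ∣ C (c₀ j₀) * constDer p m ((Φ x) ∘ₗ (br y)) Y := by
        have h16 := dvd_add h14 (Dvd.dvd.mul_left h12 (C (γ x)))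
        rwa [sub_add_cancel] at h16
      have h17 : ρ ^ A ∣ constDer p m ((Φ x) ∘ₗ (br y)) Y := by
        have e18 : constDer p m ((Φ x) ∘ₗ (br y)) Y
            = C ((c₀ j₀)⁻¹) * (C (c₀ j₀) * constDer p m ((Φ x) ∘ₗ (br y)) Y) := by
          rw [← mul_assoc, ← C_mul, inv_mul_cancel₀ hj₀, C_1, one_mul]
        rw [e18]
        exact Dvd.dvd.mul_left h15 _
      rw [hanti]
      exact dvd_neg.mpr h17
  · push_neg at hex
    have hind : ∀ c : Fin m → ZMod p, (∀ j, j ∉ (Finset.univ : Finset (Fin m)) → c j = 0) →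
        ρ ∣ linForm p m c → c = 0 := by
      intro c _ hdvd
      by_contra hc
      exact hex c hc hdvd
    have hGA : ∀ j, ρ ^ A ∣ Gv br Y x j := by
      intro j
      exact core_B hρ Finset.univ hind A (Gv br Y x) R (fun r hr => hyp' x r hr) j (Finset.mem_univ j)
    rw [constDer_eq_sum]
    exact Finset.dvd_sum fun j _ => Dvd.dvd.mul_left (hGA j) _

end Stmt9Aux
set_option maxHeartbeats 2000000 in
set_option synthInstance.maxHeartbeats 1000000 in
theorem stmt9 (p m : ℕ) [Fact p.Prime] (hm : 1 ≤ m)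
    (br : (Fin m → ZMod p) →ₗ[ZMod p] (Fin m → ZMod p) →ₗ[ZMod p] (Fin m → ZMod p))
    (halt : ∀ x, br x x = 0)
    (hjac : ∀ x y z, br x (br y z) = br (br x y) z + br y (br x z))
    (Φ : (Fin m → ZMod p) →ₗ[ZMod p] (Fin m → ZMod p) →ₗ[ZMod p] ZMod p)
    (hinv : ∀ x y z, Φ (br x y) z = -Φ y (br x z))
    (X Y : MvPolynomial (Fin m) (ZMod p)) (s : ℕ)
    (h : ∀ x : Fin m → ZMod p, ∀ r, s ≤ r → frobDer p m (br x) r Y ∈ Ideal.span {X}) :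
    ∀ x y : Fin m → ZMod p, constDer p m ((Φ y) ∘ₗ (br x)) Y ∈ Ideal.span {X} := by
  classical
  intro x y
  have hdvd : ∀ z : Fin m → ZMod p, ∀ r, s ≤ r → X ∣ frobDer p m (br z) r Y :=
    fun z r hr => Ideal.mem_span_singleton.mp (h z r hr)
  rw [Ideal.mem_span_singleton]
  clear h
  revert hdvd
  induction X using UniqueFactorizationMonoid.induction_on_coprime with
  | h0 =>
    intro hdvd
    rw [zero_dvd_iff]
    -- In this case all the `frobDer` values vanish, hence so do the `Gv`.
    have hG0 : ∀ j, Stmt9Aux.Gv br Y x j = 0 := by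
      set L := FractionRing (MvPolynomial (Fin m) (ZMod p)) with hL
      set φ : MvPolynomial (Fin m) (ZMod p) →+* L :=
        (algebraMap (MvPolynomial (Fin m) (ZMod p)) L : _) with hφ
      set em : ZMod p →+* L := φ.comp (MvPolynomial.C : ZMod p →+* MvPolynomial (Fin m) (ZMod p))
        with hem
      haveI : CharP L p := charP_of_injective_ringHom (RingHom.injective em) p
      have hφinj : Function.Injective φ :=
        IsFractionRing.injective (MvPolynomial (Fin m) (ZMod p)) L
      have hcore := Stmt9Aux.core_field (p := p) (m := m) (L := L) em (fun j => φ (MvPolynomial.X j))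
        (Finset.univ.card) Finset.univ rfl ?_ (fun j => φ (Stmt9Aux.Gv br Y x j)) s ?_
      · intro j
        have h6 : φ (Stmt9Aux.Gv br Y x j) = 0 := hcore j (Finset.mem_univ j)
        exact hφinj (by rw [h6, map_zero])
      · intro c _ hsum
        have h7 : φ (linForm p m c) = 0 := by
          rw [linForm, map_sum, ← hsum]
          exact Finset.sum_congr rfl fun j _ => by rw [map_mul]; rfl
        have h8 : linForm p m c = 0 := hφinj (by rw [h7, map_zero])
        funext i
        have h9 := congrArg (MvPolynomial.pderiv i) h8
        rw [Stmt9Aux.pderiv_linForm, map_zero] at h9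
        exact (MvPolynomial.C_injective (Fin m) (ZMod p)) (by rw [h9]; simp)
      · intro r hr
        have h3 := zero_dvd_iff.mp (hdvd x r hr)
        rw [Stmt9Aux.frobDer_eq] at h3
        have h4 : ∑ j : Fin m, φ (Stmt9Aux.Gv br Y x j) * φ (MvPolynomial.X j) ^ p ^ r
            = φ (∑ j : Fin m, Stmt9Aux.Gv br Y x j * (MvPolynomial.X j) ^ p ^ r) := by
          rw [map_sum]
          exact Finset.sum_congr rfl fun j _ => by rw [map_mul, map_pow]
        rw [h4, h3, map_zero]
    rw [Stmt9Aux.constDer_eq_sum]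
    simp [hG0]
  | h1 hu =>
    intro _
    exact hu.dvd
  | hpr i hprime =>
    intro hdvd
    exact Stmt9Aux.main_pow br halt Φ hinv Y s hprime i hdvd x y
  | hcp hrel hx' hy' =>
    intro hdvd
    refine hrel.mul_dvd
      (hx' fun z r hr => dvd_trans (dvd_mul_right _ _) (hdvd z r hr))
      (hy' fun z r hr => dvd_trans (dvd_mul_left _ _) (hdvd z r hr))
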